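/- Let K be a cocomplete category. Every finitely generated object G of K (i.e., one whose hom-functor K(G,−) : K → Set preserves colimits of directed diagrams all of whose connecting morphisms are monomorphisms) is abstractly finite: every morphism from G to a copower M·G factorizes through the subcopower M₀·G induced by some finite subset M₀ ⊆ M. -/

import Mathlib

open CategoryTheory

universe v u

namespace Paper

variable {K : Type u} [Category.{v} K]

/-- `C` together with the injections `ι` is a coproduct of the family `Y`. -/
def IsCoproductOf {M : Type v} (Y : M → K) (C : K) (ι : ∀ m, Y m ⟶ C) : Prop :=
  ∀ (Z : K) (g : ∀ m, Y m ⟶ Z), ∃! d : C ⟶ Z, ∀ m, ι m ≫ d = g m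

/-- `G` has copowers: all set-indexed coproducts of copies of `G` exist. -/
def HasCopowers (G : K) : Prop :=
  ∀ M : Type v, ∃ (C : K) (ι : M → (G ⟶ C)), IsCoproductOf (fun _ : M => G) C ι

/-- `e` is a coequalizer of the pair `r0, r1`. -/
def IsCoequalizerOf {R A B : K} (r0 r1 : R ⟶ A) (e : A ⟶ B) : Prop :=
  r0 ≫ e = r1 ≫ e ∧
    ∀ (Z : K) (f : A ⟶ Z), r0 ≫ f = r1 ≫ f → ∃! g : B ⟶ Z, e ≫ g = f

/-- `e` is a regular epimorphism: a coequalizer of some parallel pair. -/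
def IsRegEpi {A B : K} (e : A ⟶ B) : Prop :=
  ∃ (R : K) (r0 r1 : R ⟶ A), IsCoequalizerOf r0 r1 e

/-- `r0, r1` is a kernel pair of `f`. -/
def IsKernelPairOf {R A B : K} (r0 r1 : R ⟶ A) (f : A ⟶ B) : Prop :=
  r0 ≫ f = r1 ≫ f ∧
    ∀ (S : K) (s0 s1 : S ⟶ A), s0 ≫ f = s1 ≫ f →
      ∃! t : S ⟶ R, t ≫ r0 = s0 ∧ t ≫ r1 = s1

def HasKernelPairs (K : Type u) [Category.{v} K] : Prop :=
  ∀ (A B : K) (f : A ⟶ B), ∃ (R : K) (r0 r1 : R ⟶ A), IsKernelPairOf r0 r1 f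

def HasCoequalizersOfKernelPairs (K : Type u) [Category.{v} K] : Prop :=
  ∀ (R A B : K) (f : A ⟶ B) (r0 r1 : R ⟶ A), IsKernelPairOf r0 r1 f →
    ∃ (C : K) (e : A ⟶ C), IsCoequalizerOf r0 r1 e

/-- `e` is a strong (extremal) epimorphism. -/
def IsExtremalEpi {A B : K} (e : A ⟶ B) : Prop :=
  Epi e ∧ ∀ (C : K) (g : A ⟶ C) (m : C ⟶ B), Mono m → g ≫ m = e → IsIso m

/-- `G` is a generator: every canonical morphism `[h] : ∐_{h : G ⟶ X} G ⟶ X` is epic. -/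
def GeneratorP (G : K) : Prop :=
  ∀ (X C : K) (ι : (G ⟶ X) → (G ⟶ C)), IsCoproductOf (fun _ : (G ⟶ X) => G) C ι →
    ∀ d : C ⟶ X, (∀ h, ι h ≫ d = h) → Epi d

/-- `G` is a strong generator: every canonical morphism is a strong (extremal) epimorphism. -/
def StrongGenerator (G : K) : Prop :=
  ∀ (X C : K) (ι : (G ⟶ X) → (G ⟶ C)), IsCoproductOf (fun _ : (G ⟶ X) => G) C ι →
    ∀ d : C ⟶ X, (∀ h, ι h ≫ d = h) → IsExtremalEpi d

/-- `G` is a regular generator: every canonical morphism is a regular epimorphism. -/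
def RegularGenerator (G : K) : Prop :=
  ∀ (X C : K) (ι : (G ⟶ X) → (G ⟶ C)), IsCoproductOf (fun _ : (G ⟶ X) => G) C ι →
    ∀ d : C ⟶ X, (∀ h, ι h ≫ d = h) → IsRegEpi d

/-- `G` is a regular projective: morphisms from `G` factor through regular epimorphisms. -/
def RegularProjective (G : K) : Prop :=
  ∀ (A B : K) (e : A ⟶ B), IsRegEpi e → ∀ g : G ⟶ B, ∃ f : G ⟶ A, f ≫ e = g

/-- `G` is abstractly finite: every morphism from `G` into a copower `M·G` factors
through the subcopower induced by a finite subset `M₀ ⊆ M`. -/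
def AbstractlyFinite (G : K) : Prop :=
  ∀ (M : Type v) (C : K) (ι : M → (G ⟶ C)), IsCoproductOf (fun _ : M => G) C ι →
    ∀ f : G ⟶ C, ∃ M₀ : Set M, M₀.Finite ∧
      ∀ (C₀ : K) (ι₀ : M₀ → (G ⟶ C₀)) (u : C₀ ⟶ C),
        IsCoproductOf (fun _ : M₀ => G) C₀ ι₀ → (∀ m : M₀, ι₀ m ≫ u = ι m.1) →
          ∃ g : G ⟶ C₀, g ≫ u = f

/-- `G` is finitely generated: its hom-functor `K(G,−) : K ⥤ Set` preserves colimits of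
directed diagrams all of whose connecting morphisms are monomorphisms. -/
def FinitelyGenerated (G : K) : Prop :=
  ∀ (J : Type v) [Preorder J], IsDirected J (· ≤ ·) → Nonempty J →
    ∀ (D : J ⥤ K), (∀ (i j : J) (f : i ⟶ j), Mono (D.map f)) →
      ∀ (c : Limits.Cocone D), Nonempty (Limits.IsColimit c) →
        Nonempty (Limits.IsColimit ((coyoneda.obj (Opposite.op G)).mapCocone c))

/-- The pair `s0, s1` factorizes through the relation `r0, r1`. -/
def Factors {R A S : K} (r0 r1 : R ⟶ A) (s0 s1 : S ⟶ A) : Prop :=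
  ∃ t : S ⟶ R, t ≫ r0 = s0 ∧ t ≫ r1 = s1

def CollectivelyMonic {R A : K} (r0 r1 : R ⟶ A) : Prop :=
  ∀ (S : K) (f g : S ⟶ R), f ≫ r0 = g ≫ r0 → f ≫ r1 = g ≫ r1 → f = g

/-- A congruence: a collectively monic pair which is reflexive, symmetric and transitive. -/
def IsCongruence {R A : K} (r0 r1 : R ⟶ A) : Prop :=
  CollectivelyMonic r0 r1 ∧
  (∀ (S : K) (s : S ⟶ A), Factors r0 r1 s s) ∧
  (∀ (S : K) (s s' : S ⟶ A), Factors r0 r1 s s' → Factors r0 r1 s' s) ∧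
  (∀ (S : K) (s s' s'' : S ⟶ A),
    Factors r0 r1 s s' → Factors r0 r1 s' s'' → Factors r0 r1 s s'')

def HasCoequalizersOfCongruences (K : Type u) [Category.{v} K] : Prop :=
  ∀ (R A : K) (r0 r1 : R ⟶ A), IsCongruence r0 r1 →
    ∃ (C : K) (e : A ⟶ C), IsCoequalizerOf r0 r1 e

/-- `K` has effective congruences: every congruence is a kernel pair. -/
def EffectiveCongruences (K : Type u) [Category.{v} K] : Prop :=
  ∀ (R A : K) (r0 r1 : R ⟶ A), IsCongruence r0 r1 →
    ∃ (B : K) (f : A ⟶ B), IsKernelPairOf r0 r1 f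

/-- A coequalizer diagram in `Set`. -/
def IsCoequalizerOfTypes {R A C : Type v} (u v : R → A) (q : A → C) : Prop :=
  q ∘ u = q ∘ v ∧
    ∀ {Z : Type v} (h : A → Z), h ∘ u = h ∘ v → ∃! k : C → Z, k ∘ q = h

/-- `G` is effective: its hom-functor sends coequalizers of congruences to
coequalizers in `Set`. -/
def EffectiveObject (G : K) : Prop :=
  ∀ (R A : K) (r0 r1 : R ⟶ A), IsCongruence r0 r1 →
    ∀ (C : K) (e : A ⟶ C), IsCoequalizerOf r0 r1 e →
      IsCoequalizerOfTypes (fun f : G ⟶ R => f ≫ r0) (fun f : G ⟶ R => f ≫ r1)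
        (fun g : G ⟶ A => g ≫ e)

/-- The square with projections `f', e'` is a pullback of `e` along `f`. -/
def IsPullbackOf {P A B Q : K} (f' : P ⟶ A) (e' : P ⟶ B) (e : A ⟶ Q) (f : B ⟶ Q) : Prop :=
  f' ≫ e = e' ≫ f ∧
    ∀ (S : K) (a : S ⟶ A) (b : S ⟶ B), a ≫ e = b ≫ f →
      ∃! t : S ⟶ P, t ≫ f' = a ∧ t ≫ e' = b

/-- A varietal generator: a strong generator with copowers which is abstractly finite
and regularly projective. -/
def VarietalGenerator (G : K) : Prop :=
  HasCopowers G ∧ StrongGenerator G ∧ AbstractlyFinite G ∧ RegularProjective G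

/-- Barr-exactness: kernel pairs and their coequalizers exist, congruences are effective,
and regular epimorphisms are stable under pullback. -/
def BarrExact (K : Type u) [Category.{v} K] : Prop :=
  HasKernelPairs K ∧ HasCoequalizersOfKernelPairs K ∧ EffectiveCongruences K ∧
    ∀ (P A B Q : K) (f' : P ⟶ A) (e' : P ⟶ B) (e : A ⟶ Q) (f : B ⟶ Q),
      IsPullbackOf f' e' e f → IsRegEpi e → IsRegEpi e'


open CategoryTheory.Limits
open scoped Classical

instance copowDirected (M : Type v) : IsDirected {S : Finset M // S.Nonempty} (· ≤ ·) :=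
  ⟨fun S T => ⟨⟨S.1 ∪ T.1, S.2.mono Finset.subset_union_left⟩,
    Finset.subset_union_left, Finset.subset_union_right⟩⟩

/-- The directed diagram of nonempty finite subcopowers of `G` over `M`. -/
noncomputable def copowDiag [HasColimits K] (G : K) (M : Type v) :
    {S : Finset M // S.Nonempty} ⥤ K where
  obj S := ∐ (fun _ : {m // m ∈ S.1} => G)
  map {S T} φ := Sigma.desc (fun s => Sigma.ι (fun _ : {m // m ∈ T.1} => G) ⟨s.1, leOfHom φ s.2⟩)
  map_id S := by ext s; simp
  map_comp := by intros; ext s; simp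

lemma copowDiag_mono [HasColimits K] (G : K) (M : Type v)
    {S T : {S : Finset M // S.Nonempty}} (φ : S ⟶ T) : Mono ((copowDiag G M).map φ) := by
  obtain ⟨s₀, hs₀⟩ := S.2
  let r : (copowDiag G M).obj T ⟶ (copowDiag G M).obj S :=
    Sigma.desc (fun t => if h : t.1 ∈ S.1 then Sigma.ι (fun _ : {m // m ∈ S.1} => G) ⟨t.1, h⟩
      else Sigma.ι (fun _ : {m // m ∈ S.1} => G) ⟨s₀, hs₀⟩)
  have hr : (copowDiag G M).map φ ≫ r = 𝟙 _ := by
    apply Sigma.hom_ext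
    intro s
    simp [copowDiag, r, s.2]
  exact ⟨fun g h hgh => by
    have := congrArg (· ≫ r) hgh
    simpa [hr, reassoc_of% hgh] using this⟩

/-- in a cocomplete category, every finitely generated object is
abstractly finite. -/
theorem stmt1 {K : Type u} [Category.{v} K] [Limits.HasColimits K]
    (G : K) (hfg : FinitelyGenerated G) : AbstractlyFinite G := by
  intro M C ι hC f
  by_cases hM : Nonempty M
  · -- nonempty case
    haveI : Nonempty {S : Finset M // S.Nonempty} :=
      ⟨⟨{hM.some}, Finset.singleton_nonempty _⟩⟩
    -- the cocone over the diagram of finite subcopowers with apex `C`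
    let c : Limits.Cocone (copowDiag G M) :=
      { pt := C
        ι := { app := fun S => Sigma.desc (fun s => ι s.1)
               naturality := by
                 intro S T φ
                 apply Sigma.hom_ext
                 intro s
                 simp [copowDiag] } }
    have key : ∀ (t : Limits.Cocone (copowDiag G M)),
        ∃! d : C ⟶ t.pt, ∀ S, c.ι.app S ≫ d = t.ι.app S := by
      intro t
      obtain ⟨d, hd, hun⟩ := hC t.pt (fun m =>
        Sigma.ι (fun _ : {x // x ∈ ({m} : Finset M)} => G) ⟨m, Finset.mem_singleton_self m⟩ ≫
          t.ι.app ⟨{m}, Finset.singleton_nonempty m⟩)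
      have A : ∀ (S : {S : Finset M // S.Nonempty}) (s : {x // x ∈ S.1}),
          ι s.1 ≫ d = Sigma.ι (fun _ : {x // x ∈ S.1} => G) s ≫ t.ι.app S := by
        intro S s
        have hw := t.w (homOfLE (show (⟨{s.1}, Finset.singleton_nonempty _⟩ :
          {S : Finset M // S.Nonempty}) ≤ S by
            exact Finset.singleton_subset_iff.mpr s.2))
        rw [hd s.1, ← hw]
        have : Sigma.ι (fun _ : {x // x ∈ ({s.1} : Finset M)} => G)
            ⟨s.1, Finset.mem_singleton_self s.1⟩ ≫
            (copowDiag G M).map (homOfLE (show (⟨{s.1}, Finset.singleton_nonempty _⟩ :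
              {S : Finset M // S.Nonempty}) ≤ S by
                exact Finset.singleton_subset_iff.mpr s.2)) =
            Sigma.ι (fun _ : {x // x ∈ S.1} => G) s := by
          simp [copowDiag]
        exact (Category.assoc _ _ _).symm.trans (congrArg (· ≫ t.ι.app S) this)
      refine ⟨d, ?_, ?_⟩
      · intro S
        apply Sigma.hom_ext
        intro s
        show Sigma.ι _ s ≫ Sigma.desc (fun s => ι s.1) ≫ d = _
        rw [← Category.assoc, Limits.Sigma.ι_desc]
        exact A S s
      · intro d' hd'
        apply hun
        intro m
        have h1 : Sigma.ι (fun _ : {x // x ∈ ({m} : Finset M)} => G)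
            ⟨m, Finset.mem_singleton_self m⟩ ≫
            c.ι.app ⟨{m}, Finset.singleton_nonempty m⟩ = ι m := by
          simp [c]
        rw [← h1]
        exact (Category.assoc _ _ _).trans (congrArg
          (Sigma.ι (fun _ : {x // x ∈ ({m} : Finset M)} => G) ⟨m, Finset.mem_singleton_self m⟩ ≫ ·)
          (hd' ⟨{m}, Finset.singleton_nonempty m⟩))
    let hcolim : Limits.IsColimit c :=
      { desc := fun t => (key t).exists.choose
        fac := fun t S => (key t).exists.choose_spec S
        uniq := fun t d hd => (key t).unique hd (key t).exists.choose_spec }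
    obtain ⟨hc'⟩ := hfg {S : Finset M // S.Nonempty} (copowDirected M) ‹_› (copowDiag G M)
      (fun i j φ => copowDiag_mono G M φ) c ⟨hcolim⟩
    obtain ⟨S, h, hh⟩ := Limits.Types.jointly_surjective_of_isColimit hc' f
    have hh' : h ≫ c.ι.app S = f := hh
    refine ⟨(↑S.1 : Set M), S.1.finite_toSet, ?_⟩
    intro C₀ ι₀ u hC₀ hu
    refine ⟨h ≫ Sigma.desc (fun s : {x // x ∈ S.1} => ι₀ ⟨s.1, Finset.mem_coe.mpr s.2⟩), ?_⟩
    have : Sigma.desc (fun s : {x // x ∈ S.1} => ι₀ ⟨s.1, Finset.mem_coe.mpr s.2⟩) ≫ u =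
        c.ι.app S := by
      apply Sigma.hom_ext
      intro s
      rw [← Category.assoc, Limits.Sigma.ι_desc]
      simp only [c]
      rw [Limits.Sigma.ι_desc]
      exact hu ⟨s.1, Finset.mem_coe.mpr s.2⟩
    exact (Category.assoc _ _ _).trans ((congrArg (h ≫ ·) this).trans hh')
  · -- M is empty
    refine ⟨∅, Set.finite_empty, ?_⟩
    intro C₀ ι₀ u hC₀ hu
    obtain ⟨d, -, -⟩ := hC C₀ (fun m => (hM ⟨m⟩).elim)
    have huniq : ∀ (a b : C ⟶ C), a = b := by
      intro a b
      obtain ⟨d', -, hun⟩ := hC C (fun m => (hM ⟨m⟩).elim)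
      rw [hun a (fun m => (hM ⟨m⟩).elim), hun b (fun m => (hM ⟨m⟩).elim)]
    refine ⟨f ≫ d, ?_⟩
    rw [Category.assoc, huniq (d ≫ u) (𝟙 C), Category.comp_id]


end Paper
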